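/- Local optimality implies global optimality for separable concave allocation: let G(n) = ∑_{k=1}^m w_k F_k(n_k) on Ω = { n ∈ ℕ^m | n_k ≥ 1, ∑ n_k = N }, with each w_k > 0 and each F_k strictly increasing and discretely concave. If n ∈ Ω is such that no single-agent transfer between any pair of teams strictly increases G (i.e., for all i ≠ j with n_i ≥ 2, w_j(F_j(n_j+1) − F_j(n_j)) ≤ w_i(F_i(n_i) − F_i(n_i−1))), then G(n) ≥ G(n') for all n' ∈ Ω. -/

import Mathlib

open Finset

/-- Marginal gains of a discretely concave function are antitone on `[1, ∞)`. -/
lemma marg_anti (F : ℕ → ℝ)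
    (hconc : ∀ t : ℕ, 1 ≤ t → F (t + 2) - F (t + 1) ≤ F (t + 1) - F t) :
    ∀ a b : ℕ, 1 ≤ a → a ≤ b → F (b + 1) - F b ≤ F (a + 1) - F a := by
  intro a b ha hab
  induction b, hab using Nat.le_induction with
  | base => exact le_rfl
  | succ t ht ih => exact le_trans (hconc t (le_trans ha ht)) ih

/-- Sums of two functions differing at only two points. -/
lemma sum_diff_two {α : Type*} [Fintype α] [DecidableEq α] {M : Type*} [AddCommGroup M]
    (f g : α → M) (i j : α) (hij : i ≠ j) (h : ∀ k, k ≠ i → k ≠ j → f k = g k) :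
    ∑ k, f k = ∑ k, g k + ((f i - g i) + (f j - g j)) := by
  have h1 : ∑ k, (f k - g k) = ∑ k ∈ ({i, j} : Finset α), (f k - g k) := by
    refine (Finset.sum_subset (Finset.subset_univ _) ?_).symm
    intro x _ hx
    simp only [Finset.mem_insert, Finset.mem_singleton] at hx
    push_neg at hx
    rw [h x hx.1 hx.2, sub_self]
  rw [Finset.sum_pair hij] at h1
  rw [Finset.sum_sub_distrib] at h1
  rw [← h1]
  abel

/-- Local optimality with respect to single-agent transfers implies global
optimality for the separable concave allocation problem. -/
theorem local_opt_implies_global_opt (m N : ℕ) (hm : 0 < m)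
    (w : Fin m → ℝ) (hw : ∀ k, 0 < w k)
    (F : Fin m → ℕ → ℝ) (hF : ∀ k, StrictMono (F k))
    (hconc : ∀ k, ∀ t : ℕ, 1 ≤ t → F k (t + 2) - F k (t + 1) ≤ F k (t + 1) - F k t)
    (n : Fin m → ℕ) (hn1 : ∀ k, 1 ≤ n k) (hnN : ∑ k, n k = N)
    (hlocal : ∀ i j : Fin m, i ≠ j → 2 ≤ n i →
      w j * (F j (n j + 1) - F j (n j)) ≤ w i * (F i (n i) - F i (n i - 1))) :
    ∀ n' : Fin m → ℕ, (∀ k, 1 ≤ n' k) → ∑ k, n' k = N →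
      ∑ k, w k * F k (n' k) ≤ ∑ k, w k * F k (n k) := by
  suffices H : ∀ d : ℕ, ∀ n' : Fin m → ℕ, (∀ k, 1 ≤ n' k) → ∑ k, n' k = N →
      (∑ k, ((n' k - n k) + (n k - n' k))) ≤ d →
      ∑ k, w k * F k (n' k) ≤ ∑ k, w k * F k (n k) by
    intro n' h1 h2
    exact H _ n' h1 h2 le_rfl
  intro d
  induction d with
  | zero =>
    intro n' h1 h2 hd
    have hz : ∀ k ∈ Finset.univ, ((n' k - n k) + (n k - n' k)) = 0 :=
      Finset.sum_eq_zero_iff.mp (Nat.le_zero.mp hd)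
    refine le_of_eq (Finset.sum_congr rfl fun k _ => ?_)
    have := hz k (Finset.mem_univ k)
    have : n' k = n k := by omega
    rw [this]
  | succ d ih =>
    intro n' h1 h2 hd
    by_cases heq : ∀ k, n' k = n k
    · exact le_of_eq (Finset.sum_congr rfl fun k _ => by rw [heq k])
    push_neg at heq
    obtain ⟨k0, hk0⟩ := heq
    -- find i with n i < n' i
    have hexi : ∃ i, n i < n' i := by
      by_contra hc
      push_neg at hc
      have hlt : ∑ k, n' k < ∑ k, n k :=
        Finset.sum_lt_sum (fun k _ => hc k)
          ⟨k0, Finset.mem_univ k0, lt_of_le_of_ne (hc k0) hk0⟩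
      omega
    obtain ⟨i, hi⟩ := hexi
    have hexj : ∃ j, n' j < n j := by
      by_contra hc
      push_neg at hc
      have hlt : ∑ k, n k < ∑ k, n' k :=
        Finset.sum_lt_sum (fun k _ => hc k) ⟨i, Finset.mem_univ i, hi⟩
      omega
    obtain ⟨j, hj⟩ := hexj
    have hij : i ≠ j := by
      intro h; rw [h] at hi; omega
    -- the transferred allocation
    set n'' : Fin m → ℕ := fun k => if k = i then n' i - 1 else if k = j then n' j + 1 else n' k
      with hn''
    have hni : n'' i = n' i - 1 := by simp [hn'']
    have hnj : n'' j = n' j + 1 := by simp [hn'', hij.symm]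
    have hother : ∀ k, k ≠ i → k ≠ j → n'' k = n' k := by
      intro k hki hkj; simp [hn'', hki, hkj]
    have h1'' : ∀ k, 1 ≤ n'' k := by
      intro k
      by_cases hki : k = i
      · subst hki; rw [hni]; have := hn1 k; omega
      by_cases hkj : k = j
      · subst hkj; rw [hnj]; omega
      · rw [hother k hki hkj]; exact h1 k
    -- sum preserved
    have h2'' : ∑ k, n'' k = N := by
      have hcast : ∑ k, ((n'' k : ℤ)) = ∑ k, ((n' k : ℤ)) := by
        have heqn := sum_diff_two (fun k => (n'' k : ℤ)) (fun k => (n' k : ℤ)) i j hij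
          (fun k hki hkj => by rw [hother k hki hkj])
        rw [heqn, hni, hnj]
        have h1i := h1 i
        push_cast [Nat.cast_sub (by omega : 1 ≤ n' i)]
        ring
      have hcast2 : ((∑ k, n'' k : ℕ) : ℤ) = ((∑ k, n' k : ℕ) : ℤ) := by
        push_cast; exact hcast
      have hsum : ∑ k, n'' k = ∑ k, n' k := by exact_mod_cast hcast2
      rw [hsum, h2]
    have hd'' : (∑ k, ((n'' k - n k) + (n k - n'' k))) ≤ d := by
      have hlt : (∑ k, ((n'' k - n k) + (n k - n'' k))) <
          (∑ k, ((n' k - n k) + (n k - n' k))) := by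
        apply Finset.sum_lt_sum
        · intro k _
          by_cases hki : k = i
          · subst hki; rw [hni]; omega
          by_cases hkj : k = j
          · subst hkj; rw [hnj]; omega
          · rw [hother k hki hkj]
        · refine ⟨i, Finset.mem_univ i, ?_⟩
          rw [hni]; omega
      omega
    -- G n' ≤ G n''
    have hstep : ∑ k, w k * F k (n' k) ≤ ∑ k, w k * F k (n'' k) := by
      have heqn := sum_diff_two (fun k => w k * F k (n'' k)) (fun k => w k * F k (n' k)) i j hij
        (fun k hki hkj => by rw [hother k hki hkj])
      rw [heqn]
      have hbracket : 0 ≤ (w i * F i (n'' i) - w i * F i (n' i)) +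
          (w j * F j (n'' j) - w j * F j (n' j)) := by
        obtain ⟨a, ha⟩ : ∃ a, n' i = a + 1 := ⟨n' i - 1, by have := h1 i; omega⟩
        obtain ⟨b, hb⟩ : ∃ b, n j = b + 1 := ⟨n j - 1, by have := hn1 j; omega⟩
        have hni' : n'' i = a := by rw [hni, ha]; omega
        have h1ni : 1 ≤ n i := hn1 i
        have h1nj : 1 ≤ n' j := h1 j
        -- marginal at a ≤ marginal at n i
        have m1 : F i (a + 1) - F i a ≤ F i (n i + 1) - F i (n i) :=
          marg_anti (F i) (hconc i) (n i) a h1ni (by omega)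
        have m1' : w i * (F i (a + 1) - F i a) ≤ w i * (F i (n i + 1) - F i (n i)) :=
          mul_le_mul_of_nonneg_left m1 (hw i).le
        -- local optimality applied to transfer from j to i
        have m2 : w i * (F i (n i + 1) - F i (n i)) ≤
            w j * (F j (n j) - F j (n j - 1)) :=
          hlocal j i hij.symm (by omega)
        have hnj1 : n j - 1 = b := by omega
        have m2' : w i * (F i (n i + 1) - F i (n i)) ≤
            w j * (F j (b + 1) - F j b) := by
          rw [hnj1, hb] at m2; exact m2
        -- marginal at b ≤ marginal at n' j
        have m3 : F j (b + 1) - F j b ≤ F j (n' j + 1) - F j (n' j) :=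
          marg_anti (F j) (hconc j) (n' j) b h1nj (by omega)
        have m3' : w j * (F j (b + 1) - F j b) ≤ w j * (F j (n' j + 1) - F j (n' j)) :=
          mul_le_mul_of_nonneg_left m3 (hw j).le
        rw [hni', hnj, ha]
        nlinarith [m1', m2', m3']
      linarith [hbracket]
    exact le_trans hstep (ih n'' h1'' h2'' hd'')
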